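/- LFI3 is maximal with respect to LFI1: for every formula α such that ⊨_LFI1 α but ⊭_LFI3 α, the logic obtained from LFI3 by adding all substitution instances of α as theorems coincides with LFI1; that is, for all Γ and ψ, Γ ⊨_LFI1 ψ if and only if Γ ∪ {σ(α) : σ a substitution} ⊨_LFI3 ψ. -/
import Mathlib


/-- Formulas of the language with ¬, ∘, ∧, ∨, →. -/
inductive Fm : Type
  | atom : Nat → Fm
  | neg : Fm → Fm
  | circ : Fm → Fm
  | conj : Fm → Fm → Fm
  | disj : Fm → Fm → Fm
  | impl : Fm → Fm → Fm

/-- The five truth values of LFI3: T=(1,0,0), t=(1,0,1), b=(1,1,1), f=(0,1,1), F=(0,1,0). -/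
inductive V5 : Type
  | T | t | b | f | F
deriving DecidableEq

open V5

/-- Rank in the linear order F < f < b < t < T. -/
def rk : V5 → Nat
  | F => 0 | f => 1 | b => 2 | t => 3 | T => 4

/-- Infimum in the linear order F < f < b < t < T. -/
def min5 (x y : V5) : V5 := if rk x ≤ rk y then x else y

/-- Supremum in the linear order F < f < b < t < T. -/
def max5 (x y : V5) : V5 := if rk x ≤ rk y then y else x

/-- Negation: ¬(a₁,a₂,a₃) = (a₂,a₁,a₃). -/
def neg5 : V5 → V5
  | T => F | t => f | b => b | f => t | F => T

/-- Consistency: ∘(a₁,a₂,a₃) = (~(a₁∧a₂), a₃, a₃∧~(a₁∧a₂)). -/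
def circ5 : V5 → V5
  | T => T | t => b | b => F | f => b | F => T

/-- Strong negation ~a := ¬a ∧ ∘a. -/
def snd5 (x : V5) : V5 := min5 (neg5 x) (circ5 x)

/-- Implication a→b := ~a ∨ b. -/
def imp5 (x y : V5) : V5 := max5 (snd5 x) y

/-- Designated values: D = {T, t, b}. -/
def des (x : V5) : Prop := 2 ≤ rk x

/-- The valuation (homomorphism into the LFI3 algebra) extending an atom assignment. -/
def ev (v : Nat → V5) : Fm → V5
  | Fm.atom n => v n
  | Fm.neg a => neg5 (ev v a)
  | Fm.circ a => circ5 (ev v a)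
  | Fm.conj a c => min5 (ev v a) (ev v c)
  | Fm.disj a c => max5 (ev v a) (ev v c)
  | Fm.impl a c => imp5 (ev v a) (ev v c)

/-- Semantical consequence of LFI3. -/
def L3Cons (Γ : Set Fm) (ψ : Fm) : Prop :=
  ∀ v : Nat → V5, (∀ γ ∈ Γ, des (ev v γ)) → des (ev v ψ)

/-- Consequence of LFI1, given by the matrix on the subalgebra {T, b, F} of the
LFI3 algebra with designated values {T, b}. -/
def L1Cons (Γ : Set Fm) (ψ : Fm) : Prop :=
  ∀ v : Nat → V5, (∀ n, v n ∈ ({V5.T, V5.b, V5.F} : Set V5)) →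
    (∀ γ ∈ Γ, ev v γ ∈ ({V5.T, V5.b} : Set V5)) → ev v ψ ∈ ({V5.T, V5.b} : Set V5)

/-- Application of a substitution (a map from atoms to formulas) to a formula. -/
def subst (σ : Nat → Fm) : Fm → Fm
  | .atom n => σ n
  | .neg a => (subst σ a).neg
  | .circ a => (subst σ a).circ
  | .conj a c => (subst σ a).conj (subst σ c)
  | .disj a c => (subst σ a).disj (subst σ c)
  | .impl a c => (subst σ a).impl (subst σ c)

/-- Closure lemmas for the subalgebra {T,b,F}. -/
instance : Fintype V5 :=
  ⟨⟨{V5.T, V5.t, V5.b, V5.f, V5.F}, by decide⟩, by intro x; cases x <;> decide⟩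

lemma neg_mem : ∀ x ∈ ({V5.T, V5.b, V5.F} : Set V5), neg5 x ∈ ({V5.T, V5.b, V5.F} : Set V5) := by
  simp only [Set.mem_insert_iff, Set.mem_singleton_iff]
  decide
lemma circ_mem : ∀ x ∈ ({V5.T, V5.b, V5.F} : Set V5), circ5 x ∈ ({V5.T, V5.b, V5.F} : Set V5) := by
  simp only [Set.mem_insert_iff, Set.mem_singleton_iff]
  decide
lemma min_mem : ∀ x ∈ ({V5.T, V5.b, V5.F} : Set V5), ∀ y ∈ ({V5.T, V5.b, V5.F} : Set V5), min5 x y ∈ ({V5.T, V5.b, V5.F} : Set V5) := by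
  simp only [Set.mem_insert_iff, Set.mem_singleton_iff]
  decide
lemma max_mem : ∀ x ∈ ({V5.T, V5.b, V5.F} : Set V5), ∀ y ∈ ({V5.T, V5.b, V5.F} : Set V5), max5 x y ∈ ({V5.T, V5.b, V5.F} : Set V5) := by
  simp only [Set.mem_insert_iff, Set.mem_singleton_iff]
  decide
lemma imp_mem : ∀ x ∈ ({V5.T, V5.b, V5.F} : Set V5), ∀ y ∈ ({V5.T, V5.b, V5.F} : Set V5), imp5 x y ∈ ({V5.T, V5.b, V5.F} : Set V5) := by
  simp only [Set.mem_insert_iff, Set.mem_singleton_iff]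
  decide

lemma ev_mem (v : Nat → V5) (hv : ∀ n, v n ∈ ({V5.T, V5.b, V5.F} : Set V5)) :
    ∀ φ, ev v φ ∈ ({V5.T, V5.b, V5.F} : Set V5) := by
  intro φ
  induction φ with
  | atom n => exact hv n
  | neg a ih => exact neg_mem _ ih
  | circ a ih => exact circ_mem _ ih
  | conj a c iha ihc => exact min_mem _ iha _ ihc
  | disj a c iha ihc => exact max_mem _ iha _ ihc
  | impl a c iha ihc => exact imp_mem _ iha _ ihc

lemma des_of_mem2 : ∀ x ∈ ({V5.T, V5.b} : Set V5), des x := by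
  simp only [Set.mem_insert_iff, Set.mem_singleton_iff, des]
  decide
lemma mem2_of_des : ∀ x ∈ ({V5.T, V5.b, V5.F} : Set V5), des x → x ∈ ({V5.T, V5.b} : Set V5) := by
  simp only [Set.mem_insert_iff, Set.mem_singleton_iff, des]
  decide

/-- Substitution lemma. -/
lemma ev_subst (v : Nat → V5) (σ : Nat → Fm) :
    ∀ φ, ev v (subst σ φ) = ev (fun m => ev v (σ m)) φ := by
  intro φ
  induction φ with
  | atom n => rfl
  | neg a ih => simp [subst, ev, ih]
  | circ a ih => simp [subst, ev, ih]
  | conj a c iha ihc => simp [subst, ev, iha, ihc]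
  | disj a c iha ihc => simp [subst, ev, iha, ihc]
  | impl a c iha ihc => simp [subst, ev, iha, ihc]

/-- A one-variable term realizing any value c, provided q evaluates to t. -/
def th (q : Fm) : V5 → Fm
  | V5.T => q.circ.circ.neg
  | V5.t => q
  | V5.b => q.circ
  | V5.f => q.neg
  | V5.F => q.circ.circ

lemma th_val (v : Nat → V5) (q : Fm) (hq : ev v q = V5.t) :
    ∀ c, ev v (th q c) = c := by
  intro c
  cases c <;> simp [th, ev, hq] <;> rfl

/-- Any valuation designating all substitution instances of α (which fails
under w) takes atom values in the subalgebra. -/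
lemma atoms_mem (α : Fm) (w : Nat → V5) (hw : ¬ des (ev w α))
    (v : Nat → V5) (hv : ∀ σ : Nat → Fm, des (ev v (subst σ α))) :
    ∀ n, v n ∈ ({V5.T, V5.b, V5.F} : Set V5) := by
  intro n
  have key : ∀ q : Fm, ev v q = V5.t → False := by
    intro q hq
    have h := hv (fun m => th q (w m))
    rw [ev_subst] at h
    have : (fun m => ev v (th q (w m))) = w := by
      funext m; exact th_val v q hq (w m)
    rw [this] at h
    exact hw h
  cases hn : v n with
  | t => exact absurd (key (Fm.atom n) (by simp [ev, hn])) (fun h => h)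
  | f => exact absurd (key (Fm.atom n).neg (by simp [ev, hn]; rfl)) (fun h => h)
  | T => exact Or.inl rfl
  | b => exact Or.inr (Or.inl rfl)
  | F => exact Or.inr (Or.inr rfl)


/-- LFI3 is maximal w.r.t. LFI1. -/
theorem stmt10 (α : Fm) (h1 : L1Cons ∅ α) (h2 : ¬ L3Cons ∅ α) :
    ∀ (Γ : Set Fm) (ψ : Fm),
      L1Cons Γ ψ ↔ L3Cons (Γ ∪ {φ | ∃ σ : Nat → Fm, φ = subst σ α}) ψ := by
  intro Γ ψ
  obtain ⟨w, hw⟩ : ∃ w : Nat → V5, ¬ des (ev w α) := by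
    by_contra h
    push_neg at h
    exact h2 (fun v _ => h v)
  constructor
  · intro hL1 v hv
    have hinst : ∀ σ : Nat → Fm, des (ev v (subst σ α)) := by
      intro σ
      exact hv (subst σ α) (Or.inr ⟨σ, rfl⟩)
    have hS := atoms_mem α w hw v hinst
    have hΓ : ∀ γ ∈ Γ, ev v γ ∈ ({V5.T, V5.b} : Set V5) := by
      intro γ hγ
      exact mem2_of_des _ (ev_mem v hS γ) (hv γ (Or.inl hγ))
    exact des_of_mem2 _ (hL1 v hS hΓ)
  · intro h3 v hS hΓ
    have hdes : des (ev v ψ) := by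
      apply h3 v
      intro γ hγ
      rcases hγ with hγ | ⟨σ, rfl⟩
      · exact des_of_mem2 _ (hΓ γ hγ)
      · rw [ev_subst]
        have hS' : ∀ m, ev v (σ m) ∈ ({V5.T, V5.b, V5.F} : Set V5) :=
          fun m => ev_mem v hS (σ m)
        exact des_of_mem2 _ (h1 _ hS' (fun γ hγ => absurd hγ (Set.notMem_empty γ)))
    exact mem2_of_des _ (ev_mem v hS ψ) hdes
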